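/- Every alternative real division algebra is isomorphic to the reals, the complex numbers, the quaternions, or the octonions. -/

import Mathlib

open Polynomial
set_option linter.unusedSectionVars false
set_option maxHeartbeats 1000000

/-- The octonions, constructed from the quaternions via the Cayley–Dickson
construction. -/
def Octo : Type := Quaternion ℝ × Quaternion ℝ

noncomputable instance : AddCommGroup Octo :=
  inferInstanceAs (AddCommGroup (Quaternion ℝ × Quaternion ℝ))

noncomputable instance : Module ℝ Octo :=
  inferInstanceAs (Module ℝ (Quaternion ℝ × Quaternion ℝ))

/-- Cayley–Dickson multiplication on pairs of quaternions. -/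
noncomputable instance : Mul Octo :=
  ⟨fun x y => show Quaternion ℝ × Quaternion ℝ from
    (Prod.fst x * Prod.fst y - star (Prod.snd y) * Prod.snd x,
     Prod.snd y * Prod.fst x + Prod.snd x * star (Prod.fst y))⟩




open Polynomial

section Assoc

variable {A : Type*} [NonUnitalNonAssocRing A] [Module ℝ A]
    [SMulCommClass ℝ A A] [IsScalarTower ℝ A A]

/-- The associator. -/
def asc (x y z : A) : A := x * y * z - x * (y * z)

lemma asc_add₁ (x x' y z : A) : asc (x + x') y z = asc x y z + asc x' y z := by
  simp [asc, add_mul, mul_add]; abel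

lemma asc_add₂ (x y y' z : A) : asc x (y + y') z = asc x y z + asc x y' z := by
  simp [asc, add_mul, mul_add]; abel

lemma asc_add₃ (x y z z' : A) : asc x y (z + z') = asc x y z + asc x y z' := by
  simp [asc, add_mul, mul_add]; abel

lemma asc_smul₁ (c : ℝ) (x y z : A) : asc (c • x) y z = c • asc x y z := by
  simp [asc, smul_mul_assoc, smul_sub]

lemma asc_smul₂ (c : ℝ) (x y z : A) : asc x (c • y) z = c • asc x y z := by
  simp [asc, smul_mul_assoc, mul_smul_comm, smul_sub]

lemma asc_smul₃ (c : ℝ) (x y z : A) : asc x y (c • z) = c • asc x y z := by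
  simp [asc, mul_smul_comm, smul_sub]

/-- Teichmüller identity, valid in any nonassociative ring. -/
lemma teichmuller (a b c d : A) :
    asc (a * b) c d - asc a (b * c) d + asc a b (c * d)
      = a * asc b c d + asc a b c * d := by
  simp only [asc, mul_sub, sub_mul]
  abel

variable (halt : ∀ x y : A, x * (x * y) = (x * x) * y ∧ x * (y * y) = (x * y) * y)
include halt

lemma asc_self₁₂ (x y : A) : asc x x y = 0 := by
  simp [asc, (halt x y).1]

lemma asc_self₂₃ (x y : A) : asc x y y = 0 := by
  simp [asc, (halt x y).2]

lemma asc_swap₁₂ (x y z : A) : asc x y z = - asc y x z := by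
  have h := asc_self₁₂ halt (x + y) z
  rw [asc_add₁] at h
  simp only [asc_add₂] at h
  rw [asc_self₁₂ halt, asc_self₁₂ halt] at h
  have : asc x y z + asc y x z = 0 := by
    have := h; abel_nf at this ⊢; linear_combination (norm := abel) this
  linear_combination (norm := abel) this

lemma asc_swap₂₃ (x y z : A) : asc x y z = - asc x z y := by
  have h := asc_self₂₃ halt x (y + z)
  rw [asc_add₂] at h
  simp only [asc_add₃] at h
  rw [asc_self₂₃ halt, asc_self₂₃ halt] at h
  have : asc x y z + asc x z y = 0 := by
    have := h; abel_nf at this ⊢; linear_combination (norm := abel) this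
  linear_combination (norm := abel) this

lemma asc_cyc (x y z : A) : asc x y z = asc z x y := by
  rw [asc_swap₂₃ halt x y z, asc_swap₁₂ halt x z y]; simp

end Assoc


/-- Every irreducible real polynomial has degree at most two. -/
lemma irred_real_natDegree_le_two (q : ℝ[X]) (hq : Irreducible q) : q.natDegree ≤ 2 := by
  have hq0 : q ≠ 0 := hq.ne_zero
  have hdeg : 0 < q.natDegree := natDegree_pos_iff_degree_pos.2
    (degree_pos_of_irreducible hq)
  have hdeg' : 0 < (q.map (algebraMap ℝ ℂ)).degree := by
    rw [degree_map_eq_of_injective (algebraMap ℝ ℂ).injective]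
    exact natDegree_pos_iff_degree_pos.1 hdeg
  obtain ⟨z, hz⟩ := Complex.exists_root hdeg'
  have haeval : aeval z q = 0 := by
    rwa [IsRoot, eval_map, ← aeval_def] at hz
  have hint : IsIntegral ℝ z := Algebra.IsIntegral.isIntegral z
  have hdvd : minpoly ℝ z ∣ q := minpoly.dvd ℝ z haeval
  obtain ⟨c, hc⟩ := hdvd
  have hmin0 : minpoly ℝ z ≠ 0 := minpoly.ne_zero hint
  have hcunit : IsUnit c := by
    rcases hq.isUnit_or_isUnit hc with h | h
    · exact absurd h (by
        intro hu
        have := minpoly.natDegree_pos hint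
        have : (minpoly ℝ z).natDegree = 0 := natDegree_eq_zero_of_isUnit hu
        omega)
    · exact h
  have hdegle : (minpoly ℝ z).natDegree ≤ 2 := by
    have := minpoly.natDegree_le (A := ℝ) z
    simpa [Complex.finrank_real_complex] using this
  have hc0 : c ≠ 0 := hcunit.ne_zero
  have : q.natDegree = (minpoly ℝ z).natDegree + c.natDegree := by
    rw [hc, natDegree_mul hmin0 hc0]
  rw [this, natDegree_eq_zero_of_isUnit hcunit]
  omega

section Main
variable {A : Type*} [NonUnitalNonAssocRing A] [Module ℝ A]
    [SMulCommClass ℝ A A] [IsScalarTower ℝ A A] [FiniteDimensional ℝ A]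
    [Nontrivial A]
variable (hdiv : ∀ x y : A, x * y = 0 → x = 0 ∨ y = 0)
variable (halt : ∀ x y : A, x * (x * y) = (x * x) * y ∧ x * (y * y) = (x * y) * y)

section Division
include hdiv

lemma mul_cancel₁ {x y : A} (hx : x ≠ 0) (h : x * y = 0) : y = 0 :=
  ((hdiv x y h).resolve_left hx)

lemma mul_cancel₂ {x y : A} (hy : y ≠ 0) (h : x * y = 0) : x = 0 :=
  ((hdiv x y h).resolve_right hy)

lemma mulLeft_surj {x : A} (hx : x ≠ 0) : Function.Surjective (LinearMap.mulLeft ℝ x) := by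
  rw [← LinearMap.injective_iff_surjective]
  intro a b hab
  have h : x * (a - b) = 0 := by
    simp only [LinearMap.mulLeft_apply] at hab
    rw [mul_sub, hab, sub_self]
  exact sub_eq_zero.mp (mul_cancel₁ hdiv hx h)

include halt in
/-- Existence of a two-sided unit. -/
lemma exists_unit : ∃ e : A, e ≠ 0 ∧ (∀ x : A, e * x = x) ∧ (∀ x : A, x * e = x) := by
  obtain ⟨a, ha⟩ := exists_ne (0 : A)
  obtain ⟨e, he⟩ := mulLeft_surj hdiv ha a
  simp only [LinearMap.mulLeft_apply] at he
  have he0 : e ≠ 0 := by rintro rfl; rw [mul_zero] at he; exact ha he.symm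
  have hee : e * e = e := by
    have h1 : a * (e * e) = (a * e) * e := (halt a e).2
    rw [he, he] at h1
    have h2 : a * (e * e - e) = 0 := by rw [mul_sub, h1, he, sub_self]
    exact sub_eq_zero.mp (mul_cancel₁ hdiv ha h2)
  refine ⟨e, he0, fun x => ?_, fun x => ?_⟩
  · have h1 : e * (e * x) = (e * e) * x := (halt e x).1
    rw [hee] at h1
    have h2 : e * (e * x - x) = 0 := by rw [mul_sub, h1, sub_self]
    exact sub_eq_zero.mp (mul_cancel₁ hdiv he0 h2)
  · have h1 : x * (e * e) = (x * e) * e := (halt x e).2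
    rw [hee] at h1
    have h2 : (x * e - x) * e = 0 := by rw [sub_mul, ← h1, sub_self]
    exact sub_eq_zero.mp (mul_cancel₂ hdiv he0 h2)

end Division

section Quad
variable (e : A) (he0 : e ≠ 0) (he1 : ∀ x : A, e * x = x) (he2 : ∀ x : A, x * e = x)

include hdiv halt he0 he1 he2 in
/-- Every element satisfies a real quadratic equation. -/
lemma exists_quad (x : A) : ∃ a b : ℝ, x * x = a • x + b • e := by
  rcases eq_or_ne x 0 with rfl | hx
  · exact ⟨0, 0, by simp⟩
  set f : Module.End ℝ A := LinearMap.mulLeft ℝ x with hf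
  have hNT : Nontrivial (Module.End ℝ A) := by
    refine ⟨1, 0, fun h => he0 ?_⟩
    have := LinearMap.congr_fun h e
    simpa using this
  have hint : IsIntegral ℝ f := ⟨f.charpoly, f.charpoly_monic, f.aeval_self_charpoly⟩
  set p := minpoly ℝ f with hp
  have hp0 : p ≠ 0 := minpoly.ne_zero hint
  have hpdeg : 0 < p.natDegree := minpoly.natDegree_pos hint
  obtain ⟨q, hqirr, r, hqr⟩ := WfDvdMonoid.exists_irreducible_factor
    (Polynomial.not_isUnit_of_natDegree_pos p hpdeg) hp0
  have hq0 : q ≠ 0 := hqirr.ne_zero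
  have hr0 : r ≠ 0 := by rintro rfl; rw [mul_zero] at hqr; exact hp0 hqr
  have hqdegpos : 0 < q.natDegree :=
    natDegree_pos_iff_degree_pos.2 (degree_pos_of_irreducible hqirr)
  have hrne : aeval f r ≠ 0 := by
    intro hcon
    have hdvd : p ∣ r := minpoly.dvd ℝ f hcon
    have := Polynomial.natDegree_le_of_dvd hdvd hr0
    rw [hqr, natDegree_mul hq0 hr0] at this
    omega
  obtain ⟨v, hv⟩ : ∃ v : A, aeval f r v ≠ 0 := by
    by_contra hcon
    push_neg at hcon
    exact hrne (LinearMap.ext fun v => hcon v)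
  set w := aeval f r v with hw
  have hqw : aeval f q w = 0 := by
    have h0 : aeval f (q * r) = 0 := by rw [← hqr, hp]; exact minpoly.aeval ℝ f
    have h2 : (aeval f q) ((aeval f r) v) = 0 := by
      rw [← Module.End.mul_apply, ← map_mul, h0, LinearMap.zero_apply]
    exact h2
  set c := q.leadingCoeff with hc
  have hcne : c ≠ 0 := leadingCoeff_ne_zero.2 hq0
  set q' := q * C c⁻¹ with hq'
  have hq'monic : q'.Monic := monic_mul_leadingCoeff_inv hq0
  have hq'deg : q'.natDegree = q.natDegree := by
    rw [hq', natDegree_mul hq0 (by simpa using inv_ne_zero hcne)]; simp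
  have hq'w : aeval f q' w = 0 := by
    rw [hq', map_mul]
    have h3 : (aeval f q * aeval f (C c⁻¹)) w = (aeval f q) ((aeval f (C c⁻¹)) w) := by
      rw [Module.End.mul_apply]
    rw [h3]
    have h4 : (aeval f (C c⁻¹)) w = c⁻¹ • w := by
      simp [aeval_C, Module.algebraMap_end_apply]
    rw [h4, map_smul, hqw, smul_zero]
  have hq'degle : q'.natDegree ≤ 2 := by
    rw [hq'deg]; exact irred_real_natDegree_le_two q hqirr
  have hq'degpos : 0 < q'.natDegree := by rw [hq'deg]; exact hqdegpos
  have hw0 : w ≠ 0 := hv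
  have hfw : f w = x * w := rfl
  interval_cases hdeg' : q'.natDegree
  · -- degree 1
    have hshape : q' = X + C (q'.coeff 0) := hq'monic.eq_X_add_C hdeg'
    have h5 : (aeval f (X + C (q'.coeff 0))) w = 0 := by rw [← hshape]; exact hq'w
    simp only [map_add, aeval_X, aeval_C] at h5
    have hxw : x * w + (q'.coeff 0) • w = 0 := by
      simpa [hfw, Module.algebraMap_end_apply] using h5
    have h6 : (x + (q'.coeff 0) • e) * w = 0 := by
      rw [add_mul, smul_mul_assoc, he1]; exact hxw
    have hxe : x = (-(q'.coeff 0)) • e := by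
      have h7 := mul_cancel₂ hdiv hw0 h6
      have := eq_neg_of_add_eq_zero_left h7
      rw [this, neg_smul]
    refine ⟨-2 * q'.coeff 0, -(q'.coeff 0)^2, ?_⟩
    rw [hxe, smul_mul_assoc, mul_smul_comm, he1]
    module
  · -- degree 2
    have hc2 : q'.coeff 2 = 1 := by
      have := hq'monic.leadingCoeff
      rwa [leadingCoeff, hdeg'] at this
    have hsum : aeval f q' = (q'.coeff 0) • (1 : Module.End ℝ A)
        + (q'.coeff 1) • f + (q'.coeff 2) • f^2 := by
      have hs := Polynomial.aeval_eq_sum_range (S := Module.End ℝ A) (x := f) (p := q')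
      rw [hdeg'] at hs
      rw [hs]
      rw [Finset.sum_range_succ, Finset.sum_range_succ, Finset.sum_range_one]
      simp [pow_one, pow_zero]
    have h5 : (q'.coeff 0) • w + (q'.coeff 1) • (x * w) + (x * (x * w)) = 0 := by
      have h5' := hq'w
      rw [hsum] at h5'
      simpa only [LinearMap.add_apply, LinearMap.smul_apply, Module.End.one_apply,
        hc2, one_smul, pow_two, Module.End.mul_apply, LinearMap.mulLeft_apply, hf] using h5'
    have h6 : ((q'.coeff 0) • e + (q'.coeff 1) • x + x * x) * w = 0 := by
      rw [add_mul, add_mul, smul_mul_assoc, smul_mul_assoc, he1]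
      rw [(halt x w).1] at h5
      exact h5
    have h7 := mul_cancel₂ hdiv hw0 h6
    refine ⟨-(q'.coeff 1), -(q'.coeff 0), ?_⟩
    rw [eq_neg_of_add_eq_zero_right h7]
    module

/-- The "purely imaginary" elements. -/
def Vp (e : A) (v : A) : Prop := ∃ c : ℝ, c ≤ 0 ∧ v * v = c • e

include he0 in
lemma scal_inj {c d : ℝ} (h : c • e = d • e) : c = d := by
  have h2 : (c - d) • e = 0 := by rw [sub_smul, h, sub_self]
  rcases smul_eq_zero.mp h2 with h3 | h3
  · linarith [sub_eq_zero.mp (show c - d = 0 from h3)]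
  · exact absurd h3 he0

include hdiv he1 he2 in
lemma sq_root {x : A} {c : ℝ} (h : x * x = c • e) (hc : 0 < c) :
    x = (Real.sqrt c) • e ∨ x = (-(Real.sqrt c)) • e := by
  set s := Real.sqrt c with hs
  have hss : s * s = c := Real.mul_self_sqrt hc.le
  have hz : (x - s • e) * (x + s • e) = 0 := by
    have hexp : (x - s • e) * (x + s • e) = x * x - (s*s) • e := by
      simp only [mul_add, sub_mul, smul_mul_assoc, mul_smul_comm, he1, he2, smul_smul,
        smul_add]
      module
    rw [hexp, h, hss, sub_self]
  rcases hdiv _ _ hz with h3 | h3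
  · left; rw [← sub_eq_zero]; exact h3
  · right
    have h4 := eq_neg_of_add_eq_zero_left h3
    rw [h4, neg_smul]

lemma Vp_zero : Vp e (0 : A) := ⟨0, le_refl _, by simp⟩

lemma Vp_smul {v : A} (d : ℝ) (h : Vp e v) : Vp e (d • v) := by
  obtain ⟨c, hc, hv⟩ := h
  refine ⟨d^2 * c, by nlinarith [sq_nonneg d], ?_⟩
  rw [smul_mul_assoc, mul_smul_comm, hv]
  module

include hdiv he0 he2 in
lemma Vp_scalar {v : A} {d : ℝ} (h : Vp e v) (hv : v = d • e) : d = 0 ∧ v = 0 := by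
  obtain ⟨c, hc, hvv⟩ := h
  rw [hv, smul_mul_assoc, mul_smul_comm, he2 e, smul_smul] at hvv
  have hdc : d * d = c := scal_inj e he0 hvv
  have hd : d = 0 := by nlinarith
  exact ⟨hd, by rw [hv, hd, zero_smul]⟩

include hdiv he0 he1 he2 in
lemma indep3 {u v : A} (hu : Vp e u) (hv : Vp e v) (hu0 : u ≠ 0)
    (hnp : ∀ d : ℝ, v ≠ d • u) :
    ∀ r s t : ℝ, r • e + s • u + t • v = 0 → r = 0 ∧ s = 0 ∧ t = 0 := by
  obtain ⟨a, ha, hau⟩ := hu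
  obtain ⟨b, hb, hbv⟩ := hv
  have hue : ∀ d : ℝ, u ≠ d • e := by
    intro d hd
    exact hu0 (Vp_scalar hdiv e he0 he2 ⟨a, ha, hau⟩ hd).2
  have hve : ∀ d : ℝ, v ≠ d • e := by
    intro d hd
    have := (Vp_scalar hdiv e he0 he2 ⟨b, hb, hbv⟩ hd).2
    exact hnp 0 (by rw [this, zero_smul])
  intro r s t h
  by_cases ht : t = 0
  · subst ht
    rw [zero_smul, add_zero] at h
    by_cases hs : s = 0
    · subst hs
      rw [zero_smul, add_zero] at h
      rcases smul_eq_zero.mp h with h3 | h3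
      · exact ⟨h3, rfl, rfl⟩
      · exact absurd h3 he0
    · exfalso
      apply hue (-(s⁻¹ * r))
      have h2 : s • u = -(r • e) := by
        have : r • e + s • u = 0 := h
        linear_combination (norm := abel) this
      calc u = s⁻¹ • (s • u) := by rw [smul_smul, inv_mul_cancel₀ hs, one_smul]
      _ = s⁻¹ • (-(r • e)) := by rw [h2]
      _ = (-(s⁻¹ * r)) • e := by rw [smul_neg, smul_smul, neg_smul]
  · exfalso
    set r' : ℝ := -(t⁻¹ * r) with hr'
    set s' : ℝ := -(t⁻¹ * s) with hs'
    have hv' : v = r' • e + s' • u := by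
      have h2 : t • v = -(r • e) - s • u := by
        linear_combination (norm := abel) h
      calc v = t⁻¹ • (t • v) := by rw [smul_smul, inv_mul_cancel₀ ht, one_smul]
      _ = t⁻¹ • (-(r • e) - s • u) := by rw [h2]
      _ = r' • e + s' • u := by
          rw [smul_sub, smul_neg, smul_smul, smul_smul, hr', hs']
          module
    have hexp : v * v = (r'^2 + s'^2 * a) • e + (2*r'*s') • u := by
      rw [hv']
      simp only [mul_add, add_mul, smul_mul_assoc, mul_smul_comm, he1, he2]
      rw [hau]
      module
    have h3 : (r'^2 + s'^2*a) • e + (2*r'*s') • u = b • e := by rw [← hexp, hbv]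
    have h4 : (2*r'*s') • u = (b - (r'^2 + s'^2*a)) • e := by
      rw [sub_smul]
      linear_combination (norm := abel) h3
    by_cases hrs : 2*r'*s' = 0
    · have : r' = 0 ∨ s' = 0 := by
        rcases mul_eq_zero.mp hrs with h5 | h5
        · left
          rcases mul_eq_zero.mp h5 with h6 | h6
          · norm_num at h6
          · exact h6
        · right; exact h5
      rcases this with h5 | h5
      · rw [h5, zero_smul, zero_add] at hv'
        exact hnp s' hv'
      · rw [h5, zero_smul, add_zero] at hv'
        exact hve r' hv'
    · apply hue ((2*r'*s')⁻¹ * (b - (r'^2 + s'^2*a)))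
      calc u = (2*r'*s')⁻¹ • ((2*r'*s') • u) := by
            rw [smul_smul, inv_mul_cancel₀ hrs, one_smul]
      _ = (2*r'*s')⁻¹ • ((b - (r'^2 + s'^2*a)) • e) := by rw [h4]
      _ = _ := by rw [smul_smul]

include hdiv halt he0 he1 he2 in
lemma Vp_add {u v : A} (hu : Vp e u) (hv : Vp e v) : Vp e (u + v) := by
  rcases eq_or_ne u 0 with rfl | hu0
  · rwa [zero_add]
  by_cases hprop : ∃ d : ℝ, v = d • u
  · obtain ⟨d, rfl⟩ := hprop
    have : u + d • u = (1 + d) • u := by rw [add_smul, one_smul]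
    rw [this]
    exact Vp_smul e _ hu
  push_neg at hprop
  obtain ⟨a, ha, hau⟩ := hu
  obtain ⟨b, hb, hbv⟩ := hv
  obtain ⟨p₁, q₁, hq1⟩ := exists_quad hdiv halt e he0 he1 he2 (u + v)
  obtain ⟨p₂, q₂, hq2⟩ := exists_quad hdiv halt e he0 he1 he2 (u - v)
  have hsumid : (u+v) * (u+v) + (u-v) * (u-v) = (2*a + 2*b) • e := by
    have hexp : (u+v) * (u+v) + (u-v) * (u-v) = u*u + u*u + (v*v + v*v) := by
      simp only [mul_add, add_mul, mul_sub, sub_mul]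
      abel
    rw [hexp, hau, hbv]
    module
  have hcomb : (q₁ + q₂ - (2*a + 2*b)) • e + (p₁ + p₂) • u + (p₁ - p₂) • v = 0 := by
    have h5 : (p₁ • (u+v) + q₁ • e) + (p₂ • (u-v) + q₂ • e) = (2*a + 2*b) • e := by
      rw [← hq1, ← hq2]; exact hsumid
    linear_combination (norm := module) h5
  obtain ⟨-, hp, hm⟩ := indep3 hdiv e he0 he1 he2 ⟨a, ha, hau⟩ ⟨b, hb, hbv⟩ hu0 hprop
    _ _ _ hcomb
  have hp1 : p₁ = 0 := by linarith
  rw [hp1, zero_smul, zero_add] at hq1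
  refine ⟨q₁, ?_, hq1⟩
  by_contra hq
  push_neg at hq
  have hsq : 0 < Real.sqrt q₁ := Real.sqrt_pos.mpr hq
  rcases sq_root hdiv e he1 he2 hq1 hq with h6 | h6
  · obtain ⟨h7, -, -⟩ := indep3 hdiv e he0 he1 he2 ⟨a, ha, hau⟩ ⟨b, hb, hbv⟩ hu0 hprop
      (-(Real.sqrt q₁)) 1 1 (by rw [neg_smul, one_smul, one_smul, ← h6]; abel)
    linarith
  · obtain ⟨h7, -, -⟩ := indep3 hdiv e he0 he1 he2 ⟨a, ha, hau⟩ ⟨b, hb, hbv⟩ hu0 hprop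
      (Real.sqrt q₁) 1 1 (by rw [one_smul, one_smul, show (Real.sqrt q₁) • e = -((-(Real.sqrt q₁)) • e) from by module, ← h6]; abel)
    linarith


include hdiv halt he0 he1 he2 in
lemma exists_decomp (x : A) : ∃ c : ℝ, ∃ v : A, Vp e v ∧ x = c • e + v := by
  obtain ⟨a, b, hq⟩ := exists_quad hdiv halt e he0 he1 he2 x
  set v := x - (a/2) • e with hvdef
  have hv2 : v * v = (b + a^2/4) • e := by
    have hexp : v * v = x*x - a • x + (a^2/4) • e := by
      rw [hvdef]
      simp only [mul_sub, sub_mul, smul_mul_assoc, mul_smul_comm, he1, he2, smul_smul]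
      match_scalars <;> ring
    rw [hexp, hq]
    module
  by_cases hK : b + a^2/4 ≤ 0
  · exact ⟨a/2, v, ⟨b + a^2/4, hK, hv2⟩, by rw [hvdef]; abel⟩
  · push_neg at hK
    rcases sq_root hdiv e he1 he2 hv2 hK with h6 | h6
    · refine ⟨a/2 + Real.sqrt (b + a^2/4), 0, Vp_zero e, ?_⟩
      rw [add_zero, add_smul]
      rw [← h6, hvdef]
      abel
    · refine ⟨a/2 - Real.sqrt (b + a^2/4), 0, Vp_zero e, ?_⟩
      rw [add_zero, sub_smul]
      have h7 : (Real.sqrt (b + a^2/4)) • e = -v := by rw [h6]; module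
      rw [h7, hvdef]
      abel

include hdiv halt he0 he1 he2 in
lemma decomp_unique {c c' : ℝ} {v v' : A} (hv : Vp e v) (hv' : Vp e v')
    (h : c • e + v = c' • e + v') : c = c' := by
  have hsub : Vp e (v - v') := by
    have := Vp_add hdiv halt e he0 he1 he2 hv (Vp_smul e (-1) hv')
    simpa [neg_one_smul, sub_eq_add_neg] using this
  have heq : v - v' = (c' - c) • e := by
    linear_combination (norm := module) h
  have := (Vp_scalar hdiv e he0 he2 hsub heq).1
  linarith

end Quad

/-- Package of structure data for a quadratic algebra. -/
structure Pkg (A : Type*) [NonUnitalNonAssocRing A] [Module ℝ A]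
    [SMulCommClass ℝ A A] [IsScalarTower ℝ A A] : Type _ where
  e : A
  t : A → ℝ
  n : A → ℝ
  he0 : e ≠ 0
  he1 : ∀ x : A, e * x = x
  he2 : ∀ x : A, x * e = x
  t_add : ∀ x y : A, t (x + y) = t x + t y
  t_smul : ∀ (c : ℝ) (x : A), t (c • x) = c * t x
  t_e : t e = 2
  sq : ∀ x : A, x * x = t x • x - n x • e
  npos : ∀ x : A, x ≠ 0 → 0 < n x

include hdiv halt in
lemma exists_pkg : Nonempty (Pkg A) := by
  obtain ⟨e, he0, he1, he2⟩ := exists_unit hdiv halt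
  choose cf vf hvp hdec using exists_decomp hdiv halt e he0 he1 he2
  choose cv hcvle hcv using hvp
  have huniq : ∀ (x : A) (c : ℝ) (v : A), Vp e v → x = c • e + v → cf x = c := by
    intro x c v hv hx
    exact decomp_unique hdiv halt e he0 he1 he2 ⟨cv x, hcvle x, hcv x⟩ hv
      (by rw [← hdec x, ← hx])
  have hcadd : ∀ x y : A, cf (x + y) = cf x + cf y := by
    intro x y
    refine huniq (x+y) (cf x + cf y) (vf x + vf y)
      (Vp_add hdiv halt e he0 he1 he2 ⟨cv x, hcvle x, hcv x⟩ ⟨cv y, hcvle y, hcv y⟩) ?_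
    have h1 := hdec x
    have h2 := hdec y
    linear_combination (norm := module) h1 + h2
  have hcsmul : ∀ (c : ℝ) (x : A), cf (c • x) = c * cf x := by
    intro c x
    refine huniq (c • x) (c * cf x) (c • vf x) (Vp_smul e c ⟨cv x, hcvle x, hcv x⟩) ?_
    have h1 := hdec x
    linear_combination (norm := module) c • h1
  have hce : cf e = 1 := huniq e 1 0 (Vp_zero e) (by module)
  refine ⟨⟨e, fun x => 2 * cf x, fun x => (cf x)^2 - cv x, he0, he1, he2,
    fun x y => by show 2 * cf (x+y) = 2 * cf x + 2 * cf y; rw [hcadd]; ring,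
    fun c x => by show 2 * cf (c • x) = c * (2 * cf x); rw [hcsmul]; ring,
    by show 2 * cf e = 2; rw [hce]; norm_num, ?_, ?_⟩⟩
  · intro x
    show x * x = (2 * cf x) • x - ((cf x)^2 - cv x) • e
    have hx := hdec x
    have hv2 := hcv x
    have hexp : x * x = ((cf x)^2 + cv x) • e + (2 * cf x) • vf x := by
      calc x * x = (cf x • e + vf x) * (cf x • e + vf x) := by rw [← hx]
      _ = _ := by
          simp only [mul_add, add_mul, smul_mul_assoc, mul_smul_comm, he1, he2, smul_smul]
          rw [hv2]
          match_scalars <;> ring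
    rw [hexp]
    linear_combination (norm := module) (-(2 * cf x)) • hx
  · intro x hx0
    show 0 < (cf x)^2 - cv x
    by_contra hcon
    push_neg at hcon
    have h1 : cf x = 0 ∧ cv x = 0 := by
      constructor <;> nlinarith [hcvle x, sq_nonneg (cf x)]
    have h2 : vf x * vf x = 0 := by rw [hcv x, h1.2, zero_smul]
    have h3 : vf x = 0 := by
      rcases hdiv _ _ h2 with h | h <;> exact h
    have : x = 0 := by rw [hdec x, h1.1, h3, zero_smul, zero_add]
    exact hx0 this

/-- Conjugation. -/
noncomputable def Pkg.cj {A : Type*} [NonUnitalNonAssocRing A] [Module ℝ A]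
    [SMulCommClass ℝ A A] [IsScalarTower ℝ A A] (P : Pkg A) (x : A) : A :=
  P.t x • P.e - x

/-- The inner product. -/
noncomputable def Pkg.ip {A : Type*} [NonUnitalNonAssocRing A] [Module ℝ A]
    [SMulCommClass ℝ A A] [IsScalarTower ℝ A A] (P : Pkg A) (x y : A) : ℝ :=
  (P.n (x+y) - P.n x - P.n y)/2

section PkgSec
variable (P : Pkg A)

lemma pk_scal {c d : ℝ} (h : c • P.e = d • P.e) : c = d := scal_inj P.e P.he0 h

lemma t_zero : P.t 0 = 0 := by
  have := P.t_smul 0 0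
  simpa using this

lemma t_neg (x : A) : P.t (-x) = -P.t x := by
  have := P.t_smul (-1) x
  simpa using this

lemma t_sub (x y : A) : P.t (x - y) = P.t x - P.t y := by
  rw [sub_eq_add_neg, P.t_add, t_neg]; ring

lemma n_zero : P.n 0 = 0 := by
  have h := P.sq 0
  rw [mul_zero, t_zero, zero_smul, zero_sub] at h
  have h2 : P.n 0 • P.e = (0:ℝ) • P.e := by
    rw [zero_smul]
    linear_combination (norm := module) h
  exact pk_scal P h2

lemma n_e : P.n P.e = 1 := by
  have h := P.sq P.e
  rw [P.he2, P.t_e] at h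
  have h2 : P.n P.e • P.e = (1:ℝ) • P.e := by
    rw [one_smul]
    linear_combination (norm := module) h
  exact pk_scal P h2

lemma n_smul (c : ℝ) (x : A) : P.n (c • x) = c^2 * P.n x := by
  have h1 := P.sq (c • x)
  rw [P.t_smul] at h1
  have h3 : (c•x)*(c•x) = c•(c•(x*x)) := by rw [smul_mul_assoc, mul_smul_comm]
  rw [h3, P.sq x] at h1
  have h2 : P.n (c • x) • P.e = (c^2 * P.n x) • P.e := by
    linear_combination (norm := module) h1
  exact pk_scal P h2

lemma n_nonneg (x : A) : 0 ≤ P.n x := by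
  rcases eq_or_ne x 0 with rfl | hx
  · rw [n_zero]
  · exact (P.npos x hx).le

lemma n_eq_zero_iff {x : A} : P.n x = 0 ↔ x = 0 := by
  constructor
  · intro h
    by_contra hx
    exact absurd h (ne_of_gt (P.npos x hx))
  · rintro rfl; exact n_zero P

lemma n_add (x y : A) : P.n (x + y) = P.n x + P.n y + 2 * P.ip x y := by
  unfold Pkg.ip; ring

lemma ip_form (x y : A) :
    (2 * P.ip x y) • P.e = P.t x • y + P.t y • x - (x*y + y*x) := by
  have hexp : (x+y)*(x+y) = x*x + (x*y + y*x) + y*y := by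
    simp only [mul_add, add_mul]; abel
  have h1 : x*x + (x*y + y*x) + y*y = (P.t x + P.t y) • (x+y) - P.n (x+y) • P.e := by
    rw [← hexp, ← P.t_add]; exact P.sq (x+y)
  have h4 : (2 * P.ip x y : ℝ) = P.n (x+y) - P.n x - P.n y := by unfold Pkg.ip; ring
  rw [h4]
  linear_combination (norm := module) h1 - P.sq x - P.sq y

lemma mulL3 (x y : A) :
    x*y + y*x = P.t x • y + P.t y • x - (2 * P.ip x y) • P.e := by
  linear_combination (norm := module) ip_form P x y

lemma ip_symm (x y : A) : P.ip x y = P.ip y x := by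
  unfold Pkg.ip; rw [add_comm]; ring

lemma ip_self (x : A) : P.ip x x = P.n x := by
  have h : x + x = (2:ℝ) • x := by module
  unfold Pkg.ip
  rw [h, n_smul]
  ring

lemma ip_add₁ (x x' y : A) : P.ip (x + x') y = P.ip x y + P.ip x' y := by
  have k1 := ip_form P (x + x') y
  have k2 := ip_form P x y
  have k3 := ip_form P x' y
  have h4 : (x + x') * y = x * y + x' * y := add_mul x x' y
  have h5 : y * (x + x') = y * x + y * x' := mul_add y x x'
  rw [P.t_add, h4, h5] at k1
  have h6 : (2 * P.ip (x + x') y) • P.e = (2 * (P.ip x y + P.ip x' y)) • P.e := by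
    linear_combination (norm := module) k1 - k2 - k3
  have := pk_scal P h6
  linarith

lemma ip_smul₁ (c : ℝ) (x y : A) : P.ip (c • x) y = c * P.ip x y := by
  have k1 := ip_form P (c • x) y
  have k2 := ip_form P x y
  have h4 : (c • x) * y = c • (x * y) := smul_mul_assoc c x y
  have h5 : y * (c • x) = c • (y * x) := mul_smul_comm c y x
  rw [P.t_smul, h4, h5] at k1
  have h6 : (2 * P.ip (c • x) y) • P.e = (2 * (c * P.ip x y)) • P.e := by
    linear_combination (norm := module) k1 - c • k2
  have := pk_scal P h6
  linarith

lemma ip_add₂ (x y y' : A) : P.ip x (y + y') = P.ip x y + P.ip x y' := by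
  rw [ip_symm, ip_add₁, ip_symm P y, ip_symm P y']

lemma ip_smul₂ (c : ℝ) (x y : A) : P.ip x (c • y) = c * P.ip x y := by
  rw [ip_symm, ip_smul₁, ip_symm]

lemma ip_zero₁ (y : A) : P.ip 0 y = 0 := by
  have := ip_smul₁ P 0 0 y
  simpa using this

lemma ip_zero₂ (x : A) : P.ip x 0 = 0 := by rw [ip_symm, ip_zero₁]

lemma ip_sub₁ (x x' y : A) : P.ip (x - x') y = P.ip x y - P.ip x' y := by
  have h : x - x' = x + (-1 : ℝ) • x' := by module
  rw [h, ip_add₁, ip_smul₁]; ring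

lemma ip_sub₂ (x y y' : A) : P.ip x (y - y') = P.ip x y - P.ip x y' := by
  rw [ip_symm, ip_sub₁, ip_symm P y, ip_symm P y']

lemma ip_neg₁ (x y : A) : P.ip (-x) y = - P.ip x y := by
  have h : -x = (-1 : ℝ) • x := by module
  rw [h, ip_smul₁]; ring

lemma ip_e (x : A) : 2 * P.ip x P.e = P.t x := by
  have k1 := ip_form P x P.e
  rw [P.he2, P.he1, P.t_e] at k1
  have h6 : (2 * P.ip x P.e) • P.e = P.t x • P.e := by
    linear_combination (norm := module) k1
  exact pk_scal P h6

lemma ip_ext {u w : A} (h : ∀ z : A, P.ip u z = P.ip w z) : u = w := by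
  have h1 : P.ip (u - w) (u - w) = 0 := by
    rw [ip_sub₁, ip_sub₂, ip_sub₂, h u, h w]
    ring
  rw [ip_self] at h1
  have := (n_eq_zero_iff P).1 h1
  exact sub_eq_zero.mp this

lemma cj_cj (x : A) : P.cj (P.cj x) = x := by
  unfold Pkg.cj
  rw [t_sub, P.t_smul, P.t_e]
  module

lemma t_cj (x : A) : P.t (P.cj x) = P.t x := by
  unfold Pkg.cj
  rw [t_sub, P.t_smul, P.t_e]
  ring

lemma cj_e : P.cj P.e = P.e := by
  unfold Pkg.cj
  rw [P.t_e]
  module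

lemma x_add_cj (x : A) : x + P.cj x = P.t x • P.e := by
  unfold Pkg.cj; abel

lemma mul_cj (x : A) : x * P.cj x = P.n x • P.e := by
  unfold Pkg.cj
  rw [mul_sub, mul_smul_comm, P.he2]
  linear_combination (norm := module) - P.sq x

lemma cj_mul (x : A) : P.cj x * x = P.n x • P.e := by
  unfold Pkg.cj
  rw [sub_mul, smul_mul_assoc, P.he1]
  linear_combination (norm := module) - P.sq x

lemma n_cj (x : A) : P.n (P.cj x) = P.n x := by
  have h1 := mul_cj P (P.cj x)
  rw [cj_cj] at h1
  have h2 := cj_mul P x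
  rw [h1] at h2
  exact pk_scal P h2

lemma ip_cj_form (x y : A) : (2 * P.ip x y) • P.e = x * P.cj y + y * P.cj x := by
  unfold Pkg.cj
  rw [mul_sub, mul_sub, mul_smul_comm, mul_smul_comm, P.he2, P.he2]
  linear_combination (norm := module) ip_form P x y

lemma ip_cj_e (x : A) : P.ip x P.e = P.t x / 2 := by
  have := ip_e P x; linarith

lemma asc_e₁ (x y : A) : asc P.e x y = 0 := by simp [asc, P.he1]

lemma asc_e₂ (x y : A) : asc x P.e y = 0 := by simp [asc, P.he1, P.he2]

lemma asc_e₃ (x y : A) : asc x y P.e = 0 := by simp [asc, P.he2]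

include halt in
lemma asc_flex (x y : A) : asc x y x = 0 := by
  rw [asc_swap₂₃ halt, asc_self₁₂ halt, neg_zero]

lemma asc_sub₁ (x y z w : A) : asc (x - y) z w = asc x z w - asc y z w := by
  simp only [asc, sub_mul, mul_sub]; abel

include halt P in
lemma asc_xy (x y : A) : asc x y (x*y) = 0 := by
  have t1 := teichmuller x y x y
  have t2 : asc x (y*x) y = -asc (y*x) x y := by
    rw [asc_swap₂₃ halt x (y*x) y, asc_cyc halt x y (y*x)]
  have t3 : asc y x y = 0 := asc_flex halt y x
  have t4 : asc x y x = 0 := asc_flex halt x y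
  rw [t2, t3, t4] at t1
  simp only [mul_zero, zero_mul, add_zero] at t1
  have h1 : asc (x*y) x y + asc (y*x) x y = 0 := by
    have hadd : asc (x*y) x y + asc (y*x) x y = asc (x*y + y*x) x y :=
      (asc_add₁ _ _ _ _).symm
    rw [hadd, mulL3 P x y, asc_sub₁, asc_add₁, asc_smul₁, asc_smul₁, asc_smul₁,
      asc_flex halt, asc_self₁₂ halt, asc_e₁ P]
    simp
  linear_combination (norm := abel) t1 - h1

include halt P in
lemma sandwich (x y : A) : (x*y)*(y*x) = (x*(y*y))*x := by
  have h6 : asc (x*y) x y = 0 := by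
    rw [← asc_cyc halt x y (x*y)]; exact asc_xy halt P x y
  have h5 : asc (x*y) y x = 0 := by
    rw [asc_swap₂₃ halt, h6, neg_zero]
  unfold asc at h5
  rw [(show (x*y)*y = x*(y*y) from ((halt x y).2).symm)] at h5
  exact (sub_eq_zero.mp h5).symm

include hdiv in
lemma t_of_negsq {x : A} {c : ℝ} (hx2 : x*x = c • P.e) (hc : c ≤ 0) : P.t x = 0 := by
  by_contra ht
  have h1 : P.t x • x = (c + P.n x) • P.e := by
    linear_combination (norm := module) hx2 - P.sq x
  set d : ℝ := (c + P.n x)/P.t x with hd_def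
  have h2 : x = d • P.e := by
    calc x = (P.t x)⁻¹ • (P.t x • x) := by
          rw [smul_smul, inv_mul_cancel₀ ht, one_smul]
    _ = d • P.e := by rw [h1, smul_smul, hd_def, div_eq_inv_mul]
  have h3 : x*x = (d*d) • P.e := by
    rw [h2, smul_mul_assoc, mul_smul_comm, P.he2, smul_smul]
  have hd : d*d = c := pk_scal P (by rw [← h3, hx2])
  have hd0 : d = 0 := by nlinarith
  have hx0 : x = 0 := by rw [h2, hd0, zero_smul]
  exact ht (by rw [hx0, t_zero])

include hdiv halt in
lemma t_mul_comm_pure {u v : A} (htu : P.t u = 0) (htv : P.t v = 0) :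
    P.t (u*v) = P.t (v*u) := by
  rcases eq_or_ne u 0 with rfl | hu0
  · simp
  rcases eq_or_ne v 0 with rfl | hv0
  · simp
  have hu2 : u*u = (-P.n u) • P.e := by
    have h := P.sq u; rw [htu, zero_smul, zero_sub, ← neg_smul] at h; exact h
  have hv2 : v*v = (-P.n v) • P.e := by
    have h := P.sq v; rw [htv, zero_smul, zero_sub, ← neg_smul] at h; exact h
  set s : ℝ := - P.ip u v with hs
  have hL3' : u*v + v*u = (2*s) • P.e := by
    have h := mulL3 P u v
    rw [htu, htv, zero_smul, zero_smul, add_zero, zero_sub] at h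
    rw [h, hs]
    module
  set p := u*v - s • P.e with hp
  have hpow : (u*v)*(v*u) = (P.n u * P.n v) • P.e := by
    rw [sandwich halt P u v, hv2, mul_smul_comm, P.he2, smul_mul_assoc, hu2, smul_smul]
    module
  have hvu : v*u = (2*s)•P.e - u*v := by linear_combination (norm := module) hL3'
  have hp2 : p*p = (s^2 - P.n u * P.n v) • P.e := by
    rw [hp]
    have hexp : (u*v - s•P.e)*(u*v - s•P.e)
        = (u*v)*(u*v) - (2*s)•(u*v) + (s^2)•P.e := by
      simp only [sub_mul, mul_sub, smul_mul_assoc, mul_smul_comm, P.he1, P.he2, smul_smul]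
      match_scalars <;> ring
    rw [hexp]
    have huvuv : (u*v)*(u*v) = (2*s)•(u*v) - (P.n u * P.n v)•P.e := by
      have h8 : (u*v)*(v*u) = (u*v)*((2*s)•P.e - u*v) := by rw [← hvu]
      rw [hpow, mul_sub, mul_smul_comm, P.he2] at h8
      linear_combination (norm := module) h8
    rw [huvuv]
    module
  have htp : P.t p = 0 := by
    by_cases hc : s^2 - P.n u * P.n v ≤ 0
    · exact t_of_negsq hdiv P hp2 hc
    · exfalso
      push_neg at hc
      obtain ⟨μ, hμ⟩ : ∃ μ : ℝ, u*v = μ • P.e := by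
        rcases sq_root hdiv P.e P.he1 P.he2 hp2 hc with h6 | h6
        · refine ⟨s + Real.sqrt (s^2 - P.n u * P.n v), ?_⟩
          rw [hp] at h6
          linear_combination (norm := module) h6
        · refine ⟨s - Real.sqrt (s^2 - P.n u * P.n v), ?_⟩
          rw [hp] at h6
          linear_combination (norm := module) h6
      have h10 : (u*u)*v = μ•u := by
        rw [← (halt u v).1, hμ, mul_smul_comm, P.he2]
      rw [hu2, smul_mul_assoc, P.he1] at h10
      have hnu : -P.n u ≠ 0 := neg_ne_zero.mpr (ne_of_gt (P.npos u hu0))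
      have hvk : v = ((-P.n u)⁻¹ * μ) • u := by
        calc v = (-P.n u)⁻¹ • ((-P.n u)•v) := by
              rw [smul_smul, inv_mul_cancel₀ hnu, one_smul]
        _ = (-P.n u)⁻¹ • (μ • u) := by rw [h10]
        _ = _ := by rw [smul_smul]
      have hcomm : u*v = v*u := by
        rw [hvk, mul_smul_comm, smul_mul_assoc]
      have huv2 : u*v = s • P.e := by
        rw [← hcomm] at hL3'
        linear_combination (norm := module) ((1:ℝ)/2) • hL3'
      have hpz : p = 0 := by rw [hp, huv2, sub_self]
      rw [hpz, mul_zero] at hp2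
      have h11 : (0:ℝ) • P.e = (s^2 - P.n u*P.n v)•P.e := by
        rw [zero_smul, hp2]
      have := pk_scal P h11
      linarith
  have htuv : P.t (u*v) = 2*s := by
    have h12 : u*v = p + s•P.e := by rw [hp]; abel
    rw [h12, P.t_add, htp, P.t_smul, P.t_e]; ring
  have htvu : P.t (v*u) = 2*s := by
    rw [hvu, t_sub, P.t_smul, P.t_e, htuv]; ring
  rw [htuv, htvu]

include hdiv halt in
lemma t_mul_comm (x y : A) : P.t (x*y) = P.t (y*x) := by
  set a : ℝ := P.t x / 2 with ha
  set b : ℝ := P.t y / 2 with hb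
  set u := x - a • P.e with hu
  set v := y - b • P.e with hv
  have htu : P.t u = 0 := by rw [hu, t_sub, P.t_smul, P.t_e, ha]; ring
  have htv : P.t v = 0 := by rw [hv, t_sub, P.t_smul, P.t_e, hb]; ring
  have hx : x = u + a•P.e := by rw [hu]; abel
  have hy : y = v + b•P.e := by rw [hv]; abel
  have hxy : x*y = u*v + b•u + a•v + (a*b)•P.e := by
    rw [hx, hy]
    simp only [mul_add, add_mul, smul_mul_assoc, mul_smul_comm, P.he1, P.he2, smul_smul]
    match_scalars <;> ring
  have hyx : y*x = v*u + b•u + a•v + (a*b)•P.e := by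
    rw [hx, hy]
    simp only [mul_add, add_mul, smul_mul_assoc, mul_smul_comm, P.he1, P.he2, smul_smul]
    match_scalars <;> ring
  rw [hxy, hyx, P.t_add, P.t_add, P.t_add, P.t_add, P.t_add, P.t_add,
    t_mul_comm_pure hdiv halt P htu htv]

include hdiv halt in
lemma t_mul (x y : A) : P.t (x*y) = P.t x * P.t y - 2 * P.ip x y := by
  have h := mulL3 P x y
  have h2 := congrArg P.t h
  rw [P.t_add, t_sub, P.t_add, P.t_smul, P.t_smul, P.t_smul, P.t_e,
    t_mul_comm hdiv halt P x y] at h2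
  rw [t_mul_comm hdiv halt P x y]
  linarith

include hdiv halt in
lemma cj_mul_rev (x y : A) : P.cj (x*y) = P.cj y * P.cj x := by
  have hR : P.cj y * P.cj x = (P.t x * P.t y)•P.e - P.t y•x - P.t x•y + y*x := by
    unfold Pkg.cj
    simp only [sub_mul, mul_sub, smul_mul_assoc, mul_smul_comm, P.he1, P.he2, smul_smul]
    match_scalars <;> ring
  have h9 : P.t (x*y) • P.e = (P.t x * P.t y - 2*P.ip x y) • P.e := by
    rw [t_mul hdiv halt P]
  show P.t (x*y) • P.e - x*y = _
  rw [hR, h9]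
  linear_combination (norm := module) - mulL3 P x y

include halt in
lemma mul_cj_right (x y : A) : (x*y) * P.cj y = P.n y • x := by
  unfold Pkg.cj
  rw [mul_sub, mul_smul_comm, P.he2, ← (halt x y).2, P.sq y, mul_sub, mul_smul_comm,
    mul_smul_comm, P.he2]
  module

include halt in
lemma mul_cj_sandwich (x y : A) : (x*y) * (P.cj y * x) = P.n y • (x*x) := by
  have h1 : P.cj y * x = P.t y • x - y*x := by
    unfold Pkg.cj; rw [sub_mul, smul_mul_assoc, P.he1]
  rw [h1, mul_sub, mul_smul_comm, sandwich halt P x y]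
  have h2 : P.t y • ((x*y)*x) = (x*(P.t y • y))*x := by
    rw [mul_smul_comm, smul_mul_assoc]
  rw [h2, ← sub_mul, ← mul_sub]
  have h3 : P.t y • y - y*y = P.n y • P.e := by
    linear_combination (norm := module) - P.sq y
  rw [h3, mul_smul_comm, P.he2, smul_mul_assoc]

include hdiv halt in
lemma n_mul (x y : A) : P.n (x*y) = P.n x * P.n y := by
  have h1 : (x*y) * P.cj (x*y) = P.n (x*y) • P.e := mul_cj P (x*y)
  rw [cj_mul_rev hdiv halt P x y] at h1
  have h2 : P.cj y * P.cj x = P.t x • P.cj y - P.cj y * x := by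
    conv_lhs => rw [show P.cj x = P.t x • P.e - x from rfl]
    rw [mul_sub, mul_smul_comm, P.he2]
  rw [h2, mul_sub, mul_smul_comm, mul_cj_right halt P, mul_cj_sandwich halt P,
    P.sq x] at h1
  have h4 : P.n (x*y) • P.e = (P.n x * P.n y) • P.e := by
    linear_combination (norm := module) - h1
  exact pk_scal P h4

include hdiv halt in
lemma ip_mul_right (x z y : A) : P.ip (x*y) (z*y) = P.ip x z * P.n y := by
  have h1 := n_mul hdiv halt P (x+z) y
  rw [add_mul, n_add, n_add, n_mul hdiv halt P x y, n_mul hdiv halt P z y] at h1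
  linear_combination h1 / 2

include hdiv halt in
lemma ip_mul_left (x y w : A) : P.ip (x*y) (x*w) = P.n x * P.ip y w := by
  have h1 := n_mul hdiv halt P x (y+w)
  rw [mul_add, n_add, n_add, n_mul hdiv halt P x y, n_mul hdiv halt P x w] at h1
  linear_combination h1 / 2

include hdiv halt in
lemma ipE (x y z w : A) :
    P.ip (x*y) (z*w) + P.ip (x*w) (z*y) = 2 * P.ip x z * P.ip y w := by
  have h1 := ip_mul_right hdiv halt P x z (y+w)
  rw [mul_add, mul_add, ip_add₁, ip_add₂, ip_add₂, n_add,
    ip_mul_right hdiv halt P x z y, ip_mul_right hdiv halt P x z w] at h1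
  linear_combination h1

include hdiv halt in
lemma ip_mul_e (x y w : A) : P.ip (x*y) w + P.ip (x*w) y = P.t x * P.ip y w := by
  have h := ipE hdiv halt P x y P.e w
  rw [P.he1, P.he1, ip_cj_e] at h
  linear_combination h

include hdiv halt in
lemma adjL (x y z : A) : P.ip (x*y) z = P.ip (P.cj x * z) y := by
  have h1 : P.cj x * z = P.t x • z - x*z := by
    unfold Pkg.cj; rw [sub_mul, smul_mul_assoc, P.he1]
  rw [h1, ip_sub₁, ip_smul₁]
  have h2 := ip_mul_e hdiv halt P x z y
  linear_combination h2

include hdiv halt in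
lemma adjR (x y z : A) : P.ip (x*y) z = P.ip (z * P.cj y) x := by
  have h1 : z * P.cj y = P.t y • z - z*y := by
    unfold Pkg.cj; rw [mul_sub, mul_smul_comm, P.he2]
  rw [h1, ip_sub₁, ip_smul₁]
  have h2 := ipE hdiv halt P x y z P.e
  rw [P.he2, P.he2, ip_cj_e] at h2
  have s1 := ip_symm P x (z*y)
  have s2 := ip_symm P z x
  linear_combination h2 - s1 - (P.t y) * s2

include hdiv halt in
lemma two_ip_cj (a b : A) : 2 * P.ip b (P.cj a) = P.t (b*a) := by
  have h := ip_cj_form P b (P.cj a)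
  rw [cj_cj, ← cj_mul_rev hdiv halt P b a, x_add_cj] at h
  exact pk_scal P h

section Doubling

variable {B : Submodule ℝ A} {i : A}
variable (hBe : P.e ∈ B) (hBmul : ∀ a ∈ B, ∀ b ∈ B, a*b ∈ B)
variable (hiB : ∀ b ∈ B, P.ip i b = 0) (hni : P.n i = 1)

include hiB hBe in
lemma t_i : P.t i = 0 := by
  have h := ip_e P i
  rw [hiB P.e hBe] at h
  linarith

include hiB hBe in
lemma cj_i : P.cj i = -i := by
  show P.t i • P.e - i = -i
  rw [t_i P hBe hiB]
  module

include hiB hBe hni in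
lemma i_sq : i * i = -P.e := by
  have h := P.sq i
  rw [t_i P hBe hiB, hni] at h
  rw [h]
  module

include hni in
lemma i_ne : i ≠ 0 := by
  intro h
  rw [h, n_zero] at hni
  norm_num at hni

include hBe in
lemma cjB {b : A} (hb : b ∈ B) : P.cj b ∈ B :=
  Submodule.sub_mem B (Submodule.smul_mem B _ hBe) hb

include hiB hBe in
lemma K1 {b : A} (hb : b ∈ B) : b * i = i * P.cj b := by
  have h := ip_cj_form P b i
  rw [cj_i P hBe hiB, ip_symm P b i, hiB b hb, mul_neg] at h
  have h2 : (0:ℝ) • P.e = -(b*i) + i * P.cj b := by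
    rw [← h]; norm_num
  rw [zero_smul] at h2
  linear_combination (norm := abel) h2

include hiB hBe in
lemma K2 {b : A} (hb : b ∈ B) : i * b = P.cj b * i := by
  have h := K1 P hBe hiB (cjB P hBe hb)
  rw [cj_cj] at h
  exact h.symm

include hdiv halt hiB hBe in
lemma ip_bi_e {b : A} (hb : b ∈ B) : P.ip (b*i) P.e = 0 := by
  rw [adjR hdiv halt P b i P.e, cj_i P hBe hiB, mul_neg, P.he1, ip_neg₁, hiB b hb,
    neg_zero]

include hdiv halt hiB hBe in
lemma t_bi {b : A} (hb : b ∈ B) : P.t (b * i) = 0 := by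
  have h1 := ip_e P (b*i)
  rw [ip_bi_e hdiv halt P hBe hiB hb] at h1
  linarith

include hdiv halt hiB hBe in
lemma cj_bi {b : A} (hb : b ∈ B) : P.cj (b*i) = -(b*i) := by
  show P.t (b*i) • P.e - b*i = -(b*i)
  rw [t_bi hdiv halt P hBe hiB hb]
  module

include hdiv halt hiB hBe hBmul in
lemma ip_bi_B {a b : A} (ha : a ∈ B) (hb : b ∈ B) : P.ip (b*i) a = 0 := by
  rw [adjL hdiv halt P b i a, ip_symm]
  exact hiB _ (hBmul _ (cjB P hBe hb) _ ha)

include hdiv halt hiB hBe hBmul in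
lemma D2 {a b : A} (ha : a ∈ B) (hb : b ∈ B) : a * (b*i) = (b*a)*i := by
  apply ip_ext P
  intro z
  have e1 : P.ip (a*(b*i)) z = P.ip (b*i) (P.cj a * z) := by
    rw [adjL hdiv halt P a (b*i) z]; exact ip_symm P _ _
  have hcai : (P.cj a) * i = i * a := by
    have h := K1 P hBe hiB (cjB P hBe ha); rw [cj_cj] at h; exact h
  have e2 := ipE hdiv halt P b i (P.cj a) z
  rw [hcai] at e2
  have e3 := ipE hdiv halt P b z i a
  have hbi0 : P.ip b i = 0 := by rw [ip_symm]; exact hiB b hb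
  rw [hbi0] at e3
  have e4 : P.ip ((b*a)*i) z = - P.ip (z*i) (b*a) := by
    rw [adjR hdiv halt P (b*a) i z, cj_i P hBe hiB, mul_neg, ip_neg₁]
  have hL : z*i = P.t z • i - (2 * P.ip i z) • P.e - i*z := by
    have h := mulL3 P i z
    rw [t_i P hBe hiB, zero_smul, zero_add] at h
    linear_combination (norm := module) h
  have e5 : P.ip (z*i) (b*a) = P.t z * P.ip i (b*a)
      - (2*P.ip i z) * P.ip P.e (b*a) - P.ip (i*z) (b*a) := by
    rw [hL, ip_sub₁, ip_sub₁, ip_smul₁, ip_smul₁]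
  have hiba : P.ip i (b*a) = 0 := hiB _ (hBmul b hb a ha)
  have heba : P.ip P.e (b*a) = P.t (b*a) / 2 := by
    rw [ip_symm]; exact ip_cj_e P (b*a)
  have htba : 2 * P.ip b (P.cj a) = P.t (b*a) := two_ip_cj hdiv halt P a b
  have s2 := ip_symm P (b*a) (i*z)
  linear_combination e1 + e2 - e3 - e4 + e5 + s2 + P.t z * hiba
    - 2 * P.ip i z * heba + P.ip i z * htba

include hdiv halt hiB hBe hBmul in
lemma D3 {a b : A} (ha : a ∈ B) (hb : b ∈ B) : (a*i)*b = (a*P.cj b)*i := by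
  apply ip_ext P
  intro z
  have f1 : P.ip ((a*i)*b) z = P.ip (a*i) (z * P.cj b) := by
    rw [adjR hdiv halt P (a*i) b z]; exact ip_symm P _ _
  have f2 := ipE hdiv halt P a i z (P.cj b)
  have hicb : P.ip i (P.cj b) = 0 := hiB _ (cjB P hBe hb)
  rw [hicb] at f2
  have f3 : P.ip ((a*P.cj b)*i) z = - P.ip (z*i) (a*P.cj b) := by
    rw [adjR hdiv halt P (a*P.cj b) i z, cj_i P hBe hiB, mul_neg, ip_neg₁]
  have s1 := ip_symm P (a*P.cj b) (z*i)
  linear_combination f1 + f2 - f3 - s1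

include hdiv halt hiB hBe hBmul hni in
lemma D4 {a b : A} (ha : a ∈ B) (hb : b ∈ B) : (a*i)*(b*i) = -(P.cj b * a) := by
  apply ip_ext P
  intro z
  have g1 : P.ip ((a*i)*(b*i)) z = - P.ip (a*i) (z*(b*i)) := by
    rw [adjR hdiv halt P (a*i) (b*i) z, cj_bi hdiv halt P hBe hiB hb, mul_neg,
      ip_neg₁, ip_symm]
  have g2 := ipE hdiv halt P a i z (b*i)
  have g3 : P.ip i (b*i) = P.t b / 2 := by
    have h := ip_mul_right hdiv halt P P.e b i
    rw [P.he1, hni, mul_one] at h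
    rw [h, ip_symm]
    exact ip_cj_e P b
  have g4 : P.ip (a*(b*i)) (z*i) = P.ip (b*a) z := by
    rw [D2 hdiv halt P hBe hBmul hiB ha hb, ip_mul_right hdiv halt P (b*a) z i, hni,
      mul_one]
  have g5 : P.ip (-(P.cj b * a)) z = P.ip (b*a) z - P.t b * P.ip a z := by
    have hcb : P.cj b * a = P.t b • a - b*a := by
      show (P.t b • P.e - b) * a = _
      rw [sub_mul, smul_mul_assoc, P.he1]
    rw [hcb]
    rw [ip_neg₁, ip_sub₁, ip_smul₁]
    ring
  rw [g3, g4] at g2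
  rw [g1, g5]
  linarith [g2]

include hdiv halt hiB hBe hBmul hni in
lemma D5 {a b c : A} (ha : a ∈ B) (hb : b ∈ B) (hc : c ∈ B) :
    c * (a*b) = (c*a)*b := by
  have E1 : asc a b (c*i) = (c*(a*b))*i - ((c*b)*a)*i := by
    show (a*b)*(c*i) - a*(b*(c*i)) = _
    rw [D2 hdiv halt P hBe hBmul hiB (hBmul a ha b hb) hc,
      D2 hdiv halt P hBe hBmul hiB hb hc,
      D2 hdiv halt P hBe hBmul hiB ha (hBmul c hc b hb)]
  have E2 : asc a (c*i) b = ((c*a)*P.cj b)*i - ((c*P.cj b)*a)*i := by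
    show (a*(c*i))*b - a*((c*i)*b) = _
    rw [D2 hdiv halt P hBe hBmul hiB ha hc,
      D3 hdiv halt P hBe hBmul hiB (hBmul c hc a ha) hb,
      D3 hdiv halt P hBe hBmul hiB hc hb,
      D2 hdiv halt P hBe hBmul hiB ha (hBmul c hc _ (cjB P hBe hb))]
  have E3 : asc a b (c*i) + asc a (c*i) b = 0 := by
    rw [asc_swap₂₃ halt a b (c*i)]
    abel
  rw [E1, E2] at E3
  have hXi : (c*(a*b) - (c*b)*a + ((c*a)*P.cj b - (c*P.cj b)*a)) * i = 0 := by
    rw [add_mul, sub_mul, sub_mul]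
    linear_combination (norm := abel) E3
  have hX0 := mul_cancel₂ hdiv (i_ne P hni) hXi
  have h1 : (c*a)*P.cj b = P.t b•(c*a) - (c*a)*b := by
    show (c*a) * (P.t b • P.e - b) = _
    rw [mul_sub, mul_smul_comm, P.he2]
  have h2 : (c*P.cj b)*a = P.t b•(c*a) - (c*b)*a := by
    have h3 : c*P.cj b = P.t b • c - c*b := by
      show c * (P.t b • P.e - b) = _
      rw [mul_sub, mul_smul_comm, P.he2]
    rw [h3, sub_mul, smul_mul_assoc]
  rw [h1, h2] at hX0
  have h4 : c*(a*b) - (c*a)*b = 0 := by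
    linear_combination (norm := abel) hX0
  exact sub_eq_zero.mp h4

end Doubling

lemma exists_perp (B : Submodule ℝ A) (hB : B ≠ ⊤) :
    ∃ i : A, P.n i = 1 ∧ ∀ b ∈ B, P.ip i b = 0 := by
  classical
  let ipl : A →ₗ[ℝ] A →ₗ[ℝ] ℝ :=
    LinearMap.mk₂ ℝ P.ip (ip_add₁ P) (ip_smul₁ P) (ip_add₂ P) (ip_smul₂ P)
  let ψ : A →ₗ[ℝ] Module.Dual ℝ B := ipl.compl₂ B.subtype
  have hk : LinearMap.ker ψ ≠ ⊥ := by
    intro hker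
    have h1 := LinearMap.finrank_range_add_finrank_ker ψ
    rw [hker, finrank_bot, add_zero] at h1
    have h2 : Module.finrank ℝ (LinearMap.range ψ) ≤ Module.finrank ℝ (Module.Dual ℝ B) :=
      Submodule.finrank_le _
    rw [Subspace.dual_finrank_eq] at h2
    have h3 : Module.finrank ℝ B < Module.finrank ℝ A :=
      Submodule.finrank_lt hB
    omega
  rw [Submodule.ne_bot_iff] at hk
  obtain ⟨i₀, hmem, hne⟩ := hk
  have hperp : ∀ b ∈ B, P.ip i₀ b = 0 := by
    intro b hb
    have h5 := LinearMap.congr_fun (LinearMap.mem_ker.mp hmem) ⟨b, hb⟩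
    simpa [ψ, ipl] using h5
  have hn0 : 0 < P.n i₀ := P.npos _ hne
  refine ⟨(Real.sqrt (P.n i₀))⁻¹ • i₀, ?_, ?_⟩
  · rw [n_smul, inv_pow, Real.sq_sqrt hn0.le, inv_mul_cancel₀ (ne_of_gt hn0)]
  · intro b hb
    rw [ip_smul₁, hperp b hb, mul_zero]


end PkgSec
end Main

lemma mul_transfer {T A : Type*} [AddCommGroup T] [Module ℝ T] [Mul T]
    [NonUnitalNonAssocRing A] [Module ℝ A]
    (E : T ≃ₗ[ℝ] A) (hm : ∀ z w : T, E (z*w) = E z * E w) (x y : A) :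
    E.symm (x*y) = E.symm x * E.symm y := by
  apply E.injective
  rw [E.apply_symm_apply, hm, E.apply_symm_apply, E.apply_symm_apply]


/-- Every alternative real division algebra is isomorphic (as an ℝ-algebra,
i.e. by a multiplication-preserving linear equivalence) to ℝ, ℂ, the
quaternions ℍ, or the octonions 𝕆. -/
theorem stmt_1 {A : Type*} [NonUnitalNonAssocRing A] [Module ℝ A]
    [SMulCommClass ℝ A A] [IsScalarTower ℝ A A] [FiniteDimensional ℝ A]
    [Nontrivial A]
    (hdiv : ∀ x y : A, x * y = 0 → x = 0 ∨ y = 0)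
    (halt : ∀ x y : A, x * (x * y) = (x * x) * y ∧ x * (y * y) = (x * y) * y) :
    (∃ e : A ≃ₗ[ℝ] ℝ, ∀ x y : A, e (x * y) = e x * e y) ∨
    (∃ e : A ≃ₗ[ℝ] ℂ, ∀ x y : A, e (x * y) = e x * e y) ∨
    (∃ e : A ≃ₗ[ℝ] Quaternion ℝ, ∀ x y : A, e (x * y) = e x * e y) ∨
    (∃ e : A ≃ₗ[ℝ] Octo, ∀ x y : A, e (x * y) = e x * e y) := by
  classical
  obtain ⟨P⟩ := exists_pkg hdiv halt
  -- Stage ℝ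
  set φR : ℝ →ₗ[ℝ] A := LinearMap.toSpanSingleton ℝ A P.e with hφRdef
  have hφR : ∀ r : ℝ, φR r = r • P.e := fun r => rfl
  have hinjR : Function.Injective φR := by
    intro r s h
    rw [hφR, hφR] at h
    exact pk_scal P h
  have hmR : ∀ r s : ℝ, φR (r*s) = φR r * φR s := by
    intro r s
    rw [hφR, hφR, hφR, smul_mul_assoc, mul_smul_comm, P.he2, smul_smul]
  have hBRe : P.e ∈ LinearMap.range φR := ⟨1, by rw [hφR, one_smul]⟩
  have hBRmul : ∀ a ∈ LinearMap.range φR, ∀ b ∈ LinearMap.range φR,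
      a*b ∈ LinearMap.range φR := by
    rintro a ⟨r, rfl⟩ b ⟨s, rfl⟩
    exact ⟨r*s, hmR r s⟩
  by_cases hR : LinearMap.range φR = ⊤
  · left
    refine ⟨(LinearEquiv.ofBijective φR ⟨hinjR, LinearMap.range_eq_top.mp hR⟩).symm,
      mul_transfer _ ?_⟩
    intro z w
    exact hmR z w
  -- Stage ℂ
  obtain ⟨i1, hni1, hperp1⟩ := exists_perp P _ hR
  have hi1e : P.ip i1 P.e = 0 := hperp1 P.e hBRe
  have ht1 : P.t i1 = 0 := t_i P hBRe hperp1
  have h11 : i1*i1 = -P.e := i_sq P hBRe hperp1 hni1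
  have hcj1 : P.cj i1 = -i1 := cj_i P hBRe hperp1
  have hi1ne : i1 ≠ 0 := i_ne P hni1
  set φC : ℂ →ₗ[ℝ] A := Complex.reLm.smulRight P.e + Complex.imLm.smulRight i1
    with hφCdef
  have hφC : ∀ z : ℂ, φC z = z.re • P.e + z.im • i1 := by
    intro z
    simp [hφCdef]
  have hmC : ∀ z w : ℂ, φC (z*w) = φC z * φC w := by
    intro z w
    rw [hφC, hφC, hφC, Complex.mul_re, Complex.mul_im]
    simp only [mul_add, add_mul, smul_mul_assoc, mul_smul_comm, P.he1, P.he2,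
      smul_smul, h11, smul_neg, neg_smul]
    match_scalars <;> ring
  have hBCe : P.e ∈ LinearMap.range φC := ⟨1, by rw [hφC]; simp⟩
  have hi1mem : i1 ∈ LinearMap.range φC := ⟨Complex.I, by rw [hφC]; simp⟩
  have hBCmul : ∀ a ∈ LinearMap.range φC, ∀ b ∈ LinearMap.range φC,
      a*b ∈ LinearMap.range φC := by
    rintro a ⟨z, rfl⟩ b ⟨w, rfl⟩
    exact ⟨z*w, hmC z w⟩
  have hipee : P.ip P.e P.e = 1 := by rw [ip_self, n_e]
  have hip11 : P.ip i1 i1 = 1 := by rw [ip_self, hni1]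
  have hinjC : Function.Injective φC := by
    have hker : ∀ z : ℂ, φC z = 0 → z = 0 := by
      intro z hz
      rw [hφC] at hz
      have h1 := congrArg (fun w => P.ip w P.e) hz
      simp only [ip_add₁, ip_smul₁, hipee, hi1e, ip_zero₁, mul_one, mul_zero,
        add_zero, zero_add] at h1
      have h2 := congrArg (fun w => P.ip w i1) hz
      simp only [ip_add₁, ip_smul₁, hip11, ip_zero₁, mul_one, mul_zero,
        add_zero, zero_add, ip_symm P P.e i1, hi1e] at h2
      have h2' : z.im = 0 := by
        have := h2
        simpa using this
      exact Complex.ext (by simpa using h1) h2'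
    intro z w h
    have : φC (z - w) = 0 := by rw [map_sub, h, sub_self]
    exact sub_eq_zero.mp (hker _ this)
  by_cases hC : LinearMap.range φC = ⊤
  · right; left
    refine ⟨(LinearEquiv.ofBijective φC ⟨hinjC, LinearMap.range_eq_top.mp hC⟩).symm,
      mul_transfer _ ?_⟩
    intro z w
    exact hmC z w
  -- Stage ℍ
  obtain ⟨i2, hni2, hperp2⟩ := exists_perp P _ hC
  have hi2e : P.ip i2 P.e = 0 := hperp2 _ hBCe
  have hi2i1 : P.ip i2 i1 = 0 := hperp2 _ hi1mem
  have ht2 : P.t i2 = 0 := t_i P hBCe hperp2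
  have h22 : i2*i2 = -P.e := i_sq P hBCe hperp2 hni2
  have hi2ne : i2 ≠ 0 := i_ne P hni2
  set k := i1 * i2 with hk
  have h21 : i2*i1 = -k := by
    have h := D3 hdiv halt P hBCe hBCmul hperp2 hBCe hi1mem
    rw [P.he1, hcj1, mul_neg, P.he1, neg_mul, ← hk] at h
    exact h
  have h1k : i1*k = -i2 := by rw [hk, (halt i1 i2).1, h11, neg_mul, P.he1]
  have hk1 : k*i1 = i2 := by
    have h := D3 hdiv halt P hBCe hBCmul hperp2 hi1mem hi1mem
    rw [hcj1, mul_neg, h11, neg_neg, P.he1, ← hk] at h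
    exact h
  have hk2 : k*i2 = -i1 := by rw [hk, ← (halt i1 i2).2, h22, mul_neg, P.he2]
  have h2k : i2*k = i1 := by
    have h := D4 hdiv halt P hBCe hBCmul hperp2 hni2 hBCe hi1mem
    rw [P.he1, hcj1, neg_mul, neg_neg, P.he2, ← hk] at h
    exact h
  have hkk : k*k = -P.e := by
    have h := D4 hdiv halt P hBCe hBCmul hperp2 hni2 hi1mem hi1mem
    rw [hcj1, neg_mul, neg_neg, h11, ← hk] at h
    exact h
  have htk : P.t k = 0 := by
    rw [hk, t_mul hdiv halt P i1 i2, ht1, ip_symm P i1 i2, hi2i1]; ring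
  have hipke : P.ip k P.e = 0 := by rw [ip_cj_e P k, htk]; norm_num
  have hipk1 : P.ip k i1 = 0 := by
    have h := ip_mul_left hdiv halt P i1 i2 P.e
    rw [P.he2, hni1, one_mul, hi2e] at h
    rw [hk]; exact h
  have hipk2 : P.ip k i2 = 0 := by
    have h := ip_mul_right hdiv halt P i1 P.e i2
    rw [P.he1, hni2, mul_one] at h
    rw [hk, h]; exact hi1e
  have hnk : P.n k = 1 := by rw [hk, n_mul hdiv halt P, hni1, hni2, one_mul]
  have hip22 : P.ip i2 i2 = 1 := by rw [ip_self, hni2]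
  have hipkk : P.ip k k = 1 := by rw [ip_self, hnk]
  have hknez : k ≠ 0 := i_ne P hnk
  -- coordinate maps
  let reL : Quaternion ℝ →ₗ[ℝ] ℝ :=
    { toFun := fun q => q.re, map_add' := fun a b => rfl, map_smul' := fun c a => rfl }
  let imIL : Quaternion ℝ →ₗ[ℝ] ℝ :=
    { toFun := fun q => q.imI, map_add' := fun a b => rfl, map_smul' := fun c a => rfl }
  let imJL : Quaternion ℝ →ₗ[ℝ] ℝ :=
    { toFun := fun q => q.imJ, map_add' := fun a b => rfl, map_smul' := fun c a => rfl }
  let imKL : Quaternion ℝ →ₗ[ℝ] ℝ :=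
    { toFun := fun q => q.imK, map_add' := fun a b => rfl, map_smul' := fun c a => rfl }
  set φH : Quaternion ℝ →ₗ[ℝ] A := reL.smulRight P.e + imIL.smulRight i1
    + imJL.smulRight i2 + imKL.smulRight k with hφHdef
  have hφH : ∀ q : Quaternion ℝ,
      φH q = q.re • P.e + q.imI • i1 + q.imJ • i2 + q.imK • k := by
    intro q; rw [hφHdef]; rfl
  have hmH : ∀ q r : Quaternion ℝ, φH (q*r) = φH q * φH r := by
    intro q r
    rw [hφH, hφH, hφH]
    simp only [Quaternion.re_mul, Quaternion.imI_mul,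
      Quaternion.imJ_mul, Quaternion.imK_mul, mul_add, add_mul,
      smul_mul_assoc, mul_smul_comm, P.he1, P.he2, smul_smul, h11, h22, hkk,
      ← hk, h21, h1k, hk1, hk2, h2k, smul_neg, neg_smul]
    match_scalars <;> ring
  have hsy1 : P.ip P.e i1 = 0 := by rw [ip_symm]; exact hi1e
  have hsy2 : P.ip P.e i2 = 0 := by rw [ip_symm]; exact hi2e
  have hsy3 : P.ip P.e k = 0 := by rw [ip_symm]; exact hipke
  have hsy4 : P.ip i1 i2 = 0 := by rw [ip_symm]; exact hi2i1
  have hsy5 : P.ip i1 k = 0 := by rw [ip_symm]; exact hipk1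
  have hsy6 : P.ip i2 k = 0 := by rw [ip_symm]; exact hipk2
  have hinjH : Function.Injective φH := by
    have hker : ∀ q : Quaternion ℝ, φH q = 0 → q = 0 := by
      intro q hq
      rw [hφH] at hq
      have h1 := congrArg (fun w => P.ip w P.e) hq
      have h2 := congrArg (fun w => P.ip w i1) hq
      have h3 := congrArg (fun w => P.ip w i2) hq
      have h4 := congrArg (fun w => P.ip w k) hq
      simp only [ip_add₁, ip_smul₁, ip_zero₁, hipee, hip11, hip22, hipkk,
        hi1e, hi2e, hi2i1, hipke, hipk1, hipk2, hsy1, hsy2, hsy3, hsy4, hsy5, hsy6,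
        mul_one, mul_zero, add_zero, zero_add] at h1 h2 h3 h4
      ext <;> simp_all [Quaternion.re_zero, Quaternion.imI_zero, Quaternion.imJ_zero, Quaternion.imK_zero]
    intro q r h
    have h0 : φH (q - r) = 0 := by rw [map_sub, h, sub_self]
    exact sub_eq_zero.mp (hker _ h0)
  have hBHe : P.e ∈ LinearMap.range φH := ⟨1, by rw [hφH]; simp [Quaternion.re_one, Quaternion.imI_one, Quaternion.imJ_one, Quaternion.imK_one]⟩
  have hBHi1 : i1 ∈ LinearMap.range φH := ⟨show Quaternion ℝ from ⟨0,1,0,0⟩, by rw [hφH]; simp⟩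
  have hBHi2 : i2 ∈ LinearMap.range φH := ⟨show Quaternion ℝ from ⟨0,0,1,0⟩, by rw [hφH]; simp⟩
  have hBHk : k ∈ LinearMap.range φH := ⟨show Quaternion ℝ from ⟨0,0,0,1⟩, by rw [hφH]; simp⟩
  have hBHmul : ∀ a ∈ LinearMap.range φH, ∀ b ∈ LinearMap.range φH,
      a*b ∈ LinearMap.range φH := by
    rintro a ⟨q, rfl⟩ b ⟨r, rfl⟩
    exact ⟨q*r, hmH q r⟩
  by_cases hH : LinearMap.range φH = ⊤
  · right; right; left
    refine ⟨(LinearEquiv.ofBijective φH ⟨hinjH, LinearMap.range_eq_top.mp hH⟩).symm,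
      mul_transfer _ ?_⟩
    intro z w
    exact hmH z w
  -- Stage 𝕆
  obtain ⟨i3, hni3, hperp3⟩ := exists_perp P _ hH
  have hi3ne : i3 ≠ 0 := i_ne P hni3
  have hstar : ∀ q : Quaternion ℝ, φH (star q) = P.cj (φH q) := by
    intro q
    have ht : P.t (φH q) = 2 * q.re := by
      rw [hφH, P.t_add, P.t_add, P.t_add, P.t_smul, P.t_smul, P.t_smul, P.t_smul,
        P.t_e, ht1, ht2, htk]
      ring
    show φH (star q) = P.t (φH q) • P.e - φH q
    rw [ht, hφH, hφH]
    simp only [Quaternion.re_star, Quaternion.imI_star, Quaternion.imJ_star,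
      Quaternion.imK_star]
    match_scalars <;> ring
  let fstL : Octo →ₗ[ℝ] Quaternion ℝ :=
    { toFun := fun x => Prod.fst x, map_add' := fun a b => rfl,
      map_smul' := fun c a => rfl }
  let sndL : Octo →ₗ[ℝ] Quaternion ℝ :=
    { toFun := fun x => Prod.snd x, map_add' := fun a b => rfl,
      map_smul' := fun c a => rfl }
  set φO : Octo →ₗ[ℝ] A := φH.comp fstL
      + (LinearMap.mulRight ℝ i3).comp (φH.comp sndL) with hφOdef
  have hφO : ∀ x : Octo, φO x = φH (Prod.fst x) + φH (Prod.snd x) * i3 := by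
    intro x; rw [hφOdef]; rfl
  have hmO : ∀ x y : Octo, φO (x*y) = φO x * φO y := by
    intro x y
    have hxy : φO (x*y) = φH (Prod.fst x * Prod.fst y - star (Prod.snd y) * Prod.snd x)
        + φH (Prod.snd y * Prod.fst x + Prod.snd x * star (Prod.fst y)) * i3 := by
      rw [hφO]; rfl
    have e1 : φH (Prod.fst x) * (φH (Prod.snd y) * i3)
        = (φH (Prod.snd y) * φH (Prod.fst x)) * i3 :=
      D2 hdiv halt P hBHe hBHmul hperp3 ⟨Prod.fst x, rfl⟩ ⟨Prod.snd y, rfl⟩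
    have e2 : (φH (Prod.snd x) * i3) * φH (Prod.fst y)
        = (φH (Prod.snd x) * P.cj (φH (Prod.fst y))) * i3 :=
      D3 hdiv halt P hBHe hBHmul hperp3 ⟨Prod.snd x, rfl⟩ ⟨Prod.fst y, rfl⟩
    have e3 : (φH (Prod.snd x) * i3) * (φH (Prod.snd y) * i3)
        = -(P.cj (φH (Prod.snd y)) * φH (Prod.snd x)) :=
      D4 hdiv halt P hBHe hBHmul hperp3 hni3 ⟨Prod.snd x, rfl⟩ ⟨Prod.snd y, rfl⟩
    rw [hxy, map_sub, map_add, hmH, hmH, hmH, hmH, hstar, hstar, hφO, hφO]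
    rw [mul_add (φH (Prod.fst x) + φH (Prod.snd x) * i3),
      add_mul (φH (Prod.fst x)) (φH (Prod.snd x) * i3),
      add_mul (φH (Prod.fst x)) (φH (Prod.snd x) * i3)]
    rw [e1, e2, e3, add_mul]
    abel
  have hinjO : Function.Injective φO := by
    have hker : ∀ x : Octo, φO x = 0 → x = 0 := by
      intro x hx
      rw [hφO] at hx
      have hp : P.ip (φH (Prod.snd x) * i3) (φH (Prod.fst x)) = 0 :=
        ip_bi_B hdiv halt P hBHe hBHmul hperp3 ⟨Prod.fst x, rfl⟩ ⟨Prod.snd x, rfl⟩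
      have h1 := congrArg (fun w => P.ip w (φH (Prod.fst x))) hx
      simp only [ip_add₁, ip_zero₁, hp, add_zero] at h1
      rw [ip_self] at h1
      have h2 : φH (Prod.fst x) = 0 := (n_eq_zero_iff P).1 h1
      have hx1 : Prod.fst x = 0 := hinjH (by rw [h2, map_zero])
      rw [h2, zero_add] at hx
      have h3 : φH (Prod.snd x) = 0 := mul_cancel₂ hdiv hi3ne hx
      have hx2 : Prod.snd x = 0 := hinjH (by rw [h3, map_zero])
      exact Prod.ext hx1 hx2
    intro u v h
    have h0 : φO (u - v) = 0 := by rw [map_sub, h, sub_self]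
    exact sub_eq_zero.mp (hker _ h0)
  have hφH1 : φH 1 = P.e := by rw [hφH]; simp [Quaternion.re_one, Quaternion.imI_one, Quaternion.imJ_one, Quaternion.imK_one]
  have hBOe : P.e ∈ LinearMap.range φO :=
    ⟨(show Octo from ((1 : Quaternion ℝ), (0 : Quaternion ℝ))), by
      rw [hφO]
      show φH 1 + φH 0 * i3 = P.e
      rw [hφH1, map_zero, zero_mul, add_zero]⟩
  have hBOmul : ∀ a ∈ LinearMap.range φO, ∀ b ∈ LinearMap.range φO,
      a*b ∈ LinearMap.range φO := by
    rintro a ⟨q, rfl⟩ b ⟨r, rfl⟩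
    exact ⟨q*r, hmO q r⟩
  have hO : LinearMap.range φO = ⊤ := by
    by_contra hO
    obtain ⟨i4, hni4, hperp4⟩ := exists_perp P _ hO
    have hi1O : i1 ∈ LinearMap.range φO :=
      ⟨(show Octo from ((⟨0,1,0,0⟩ : Quaternion ℝ), (0 : Quaternion ℝ))), by
        rw [hφO]
        show φH ⟨0,1,0,0⟩ + φH 0 * i3 = i1
        rw [map_zero, zero_mul, add_zero, hφH (show Quaternion ℝ from ⟨0,1,0,0⟩)]
        simp⟩
    have hi2O : i2 ∈ LinearMap.range φO :=
      ⟨(show Octo from ((⟨0,0,1,0⟩ : Quaternion ℝ), (0 : Quaternion ℝ))), by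
        rw [hφO]
        show φH ⟨0,0,1,0⟩ + φH 0 * i3 = i2
        rw [map_zero, zero_mul, add_zero, hφH (show Quaternion ℝ from ⟨0,0,1,0⟩)]
        simp⟩
    have hi3O : i3 ∈ LinearMap.range φO :=
      ⟨(show Octo from ((0 : Quaternion ℝ), (1 : Quaternion ℝ))), by
        rw [hφO]
        show φH 0 + φH 1 * i3 = i3
        rw [map_zero, zero_add, hφH1, P.he1]⟩
    have hassoc := D5 hdiv halt P hBOe hBOmul hperp4 hni4 hi2O hi3O hi1O
    have hD2'' : i1*(i2*i3) = (i2*i1)*i3 :=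
      D2 hdiv halt P hBHe hBHmul hperp3 hBHi1 hBHi2
    rw [h21, neg_mul] at hD2''
    rw [hassoc, ← hk] at hD2''
    have h2z : (2:ℝ) • (k*i3) = 0 := by
      rw [two_smul]
      linear_combination (norm := abel) hD2''
    rcases smul_eq_zero.mp h2z with h | h
    · norm_num at h
    · rcases hdiv _ _ h with h' | h'
      · exact hknez h'
      · exact hi3ne h'
  right; right; right
  refine ⟨(LinearEquiv.ofBijective φO ⟨hinjO, LinearMap.range_eq_top.mp hO⟩).symm,
    mul_transfer _ ?_⟩
  intro z w
  exact hmO z w
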